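/- arXiv:2109.12780 — 2 statements merged into one kernel-verified Lean document; each statement's English description precedes it below -/
import Mathlib

section
/- Let (X,d) be an A-uniform metric space with quasihyperbolic metric k. Then for all x, y ∈ X: log(1 + d(x,y)/min{d(x,∂X), d(y,∂X)}) ≤ k(x,y) ≤ 4A²·log(1 + d(x,y)/min{d(x,∂X), d(y,∂X)}). -/
open Set Metric Filter MeasureTheory

noncomputable section

variable {X : Type*} [MetricSpace X]

/-- Distance from a point of `X` to the metric boundary `∂X = X̄ ∖ X`,
computed in the metric completion of `X`. -/
def distBdry (x : X) : ℝ :=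
  Metric.infDist (x : UniformSpace.Completion X)
    ((Set.range ((↑) : X → UniformSpace.Completion X))ᶜ)

/-- `γ` is a unit-speed (arclength-parametrized) curve on `[0, L]`. -/
def UnitSpeedOn (γ : ℝ → X) (L : ℝ) : Prop :=
  ∀ a b : ℝ, 0 ≤ a → a ≤ b → b ≤ L →
    eVariationOn γ (Set.Icc a b) = ENNReal.ofReal (b - a)

/-- A unit-speed curve in `X` from `x` to `y` on `[0, L]`. -/
def IsArclengthCurve (γ : ℝ → X) (L : ℝ) (x y : X) : Prop :=
  0 ≤ L ∧ γ 0 = x ∧ γ L = y ∧ ContinuousOn γ (Set.Icc 0 L) ∧ UnitSpeedOn γ L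

/-- The quasihyperbolic metric of `X`: infimum over arclength-parametrized
curves of ∫ ds / d(·, ∂X). -/
def qhDistX (x y : X) : ℝ :=
  sInf {r | ∃ (L : ℝ) (γ : ℝ → X), IsArclengthCurve γ L x y ∧
    r = ∫ t in (0:ℝ)..L, 1 / distBdry (γ t)}

/-- `X` is an `A`-uniform space. -/
def IsUniformSpaceA (X : Type*) [MetricSpace X] (A : ℝ) : Prop :=
  ∀ x y : X, ∃ (L : ℝ) (γ : ℝ → X), IsArclengthCurve γ L x y ∧
    L ≤ A * dist x y ∧
    ∀ t ∈ Set.Icc (0:ℝ) L, min t (L - t) ≤ A * distBdry (γ t)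

theorem distBdry_le (x y : X) : distBdry x ≤ distBdry y + dist x y := by
  have := Metric.infDist_le_infDist_add_dist
    (x := (x : UniformSpace.Completion X)) (y := (y : UniformSpace.Completion X))
    (s := (Set.range ((↑) : X → UniformSpace.Completion X))ᶜ)
  rwa [UniformSpace.Completion.dist_eq] at this

theorem distBdry_lipschitz : LipschitzWith 1 (distBdry (X := X)) := by
  exact LipschitzWith.of_le_add fun x y => distBdry_le x y

theorem distBdry_pos [LocallyCompactSpace X]
    (hnc : ((Set.range ((↑) : X → UniformSpace.Completion X))ᶜ).Nonempty) (x : X) :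
    0 < distBdry x := by
  obtain ⟨r, hr, hcomp⟩ := exists_isCompact_closedBall x
  have key : Metric.ball (x : UniformSpace.Completion X) r ⊆
      Set.range ((↑) : X → UniformSpace.Completion X) := by
    intro p hp
    have hpc : p ∈ closure (((↑) : X → UniformSpace.Completion X) '' Metric.closedBall x r) := by
      rw [Metric.mem_closure_iff]
      intro ε hε
      have h1 : dist p (x : UniformSpace.Completion X) < r := by
        simpa [dist_comm] using hp
      obtain ⟨q, hq, hqd⟩ := Metric.mem_closure_iff.mp
        ((UniformSpace.Completion.denseRange_coe (α := X)).closure_eq ▸ Set.mem_univ p :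
          p ∈ closure (Set.range ((↑) : X → UniformSpace.Completion X)))
        (min ε (r - dist p (x : UniformSpace.Completion X)))
        (lt_min hε (by linarith))
      obtain ⟨z, rfl⟩ := hq
      refine ⟨(z : UniformSpace.Completion X), ⟨z, ?_, rfl⟩, lt_of_lt_of_le hqd (min_le_left _ _)⟩
      have : dist (z : UniformSpace.Completion X) (x : UniformSpace.Completion X) ≤
          dist (z : UniformSpace.Completion X) p + dist p (x : UniformSpace.Completion X) :=
        dist_triangle _ _ _
      have hz : dist z x < r := by
        rw [← UniformSpace.Completion.dist_eq]
        calc dist (z : UniformSpace.Completion X) (x : UniformSpace.Completion X)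
            ≤ dist (z : UniformSpace.Completion X) p + dist p (x : UniformSpace.Completion X) :=
              dist_triangle _ _ _
          _ < (r - dist p (x : UniformSpace.Completion X)) + dist p (x : UniformSpace.Completion X) := by
              gcongr
              · exact lt_of_lt_of_le (by rwa [dist_comm] at hqd; ) (min_le_right _ _)
          _ = r := by ring
      exact Metric.mem_closedBall.mpr hz.le
    have hclosed : IsClosed (((↑) : X → UniformSpace.Completion X) '' Metric.closedBall x r) :=
      (hcomp.image (UniformSpace.Completion.continuous_coe X)).isClosed
    rw [hclosed.closure_eq] at hpc
    obtain ⟨z, _, rfl⟩ := hpc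
    exact ⟨z, rfl⟩
  have : r ≤ distBdry x := by
    rw [distBdry]
    rw [← not_lt]
    intro h
    obtain ⟨p, hp, hpd⟩ := (Metric.infDist_lt_iff hnc).mp h
    exact hp (key (by simpa [Metric.mem_ball, dist_comm] using hpd))
  linarith

theorem dist_le_of_unitSpeed {γ : ℝ → X} {L : ℝ} (h : UnitSpeedOn γ L)
    {a b : ℝ} (ha : 0 ≤ a) (hab : a ≤ b) (hb : b ≤ L) : dist (γ a) (γ b) ≤ b - a := by
  have h2 := eVariationOn.edist_le γ (show a ∈ Icc a b from ⟨le_refl a, hab⟩)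
    (show b ∈ Icc a b from ⟨hab, le_refl b⟩)
  rw [h a b ha hab hb, edist_dist] at h2
  exact (ENNReal.ofReal_le_ofReal_iff (by linarith)).mp h2

theorem integral_one_div_add {a b c : ℝ} (h : 0 < c + a) (hab : a ≤ b) :
    ∫ t in a..b, 1 / (c + t) = Real.log ((c + b) / (c + a)) := by
  rw [intervalIntegral.integral_comp_add_left (fun u => 1 / u) c]
  exact integral_one_div (by
    intro hx
    rw [Set.mem_uIcc] at hx
    rcases hx with ⟨h1, h2⟩ | ⟨h1, h2⟩ <;> nlinarith)

theorem integral_one_div_sub {a b c : ℝ} (h : 0 < c - b) (hab : a ≤ b) :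
    ∫ t in a..b, 1 / (c - t) = Real.log ((c - a) / (c - b)) := by
  rw [intervalIntegral.integral_comp_sub_left (fun u => 1 / u) c]
  exact integral_one_div (by
    intro hx
    rw [Set.mem_uIcc] at hx
    rcases hx with ⟨h1, h2⟩ | ⟨h1, h2⟩ <;> nlinarith)

theorem contOn_one_div {f : ℝ → ℝ} {s : Set ℝ} (hf : ContinuousOn f s)
    (hpos : ∀ t ∈ s, 0 < f t) : ContinuousOn (fun t => 1 / f t) s :=
  continuousOn_const.div hf (fun t ht => (hpos t ht).ne')

theorem log_ge_div {u : ℝ} (hu : 0 ≤ u) : u / (1 + u) ≤ Real.log (1 + u) := by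
  have h1 : (0:ℝ) < 1 + u := by linarith
  have h2 := Real.log_le_sub_one_of_pos (show (0:ℝ) < (1+u)⁻¹ by positivity)
  rw [Real.log_inv] at h2
  have h3 : (1+u)⁻¹ - 1 = -(u / (1+u)) := by field_simp; ring
  linarith [h2.trans_eq h3]

theorem bernoulli_log {s A : ℝ} (hs : 0 ≤ s) (hA : 1 ≤ A) :
    Real.log (1 + A * s) ≤ A * Real.log (1 + s) := by
  have h1 : 1 + A * s ≤ (1 + s) ^ A :=
    one_add_mul_self_le_rpow_one_add (by linarith) hA
  calc Real.log (1 + A * s) ≤ Real.log ((1 + s) ^ A) :=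
        Real.log_le_log (by nlinarith) h1
    _ = A * Real.log (1 + s) := Real.log_rpow (by linarith) A

theorem lower_est {f : ℝ → ℝ} {L c : ℝ} (hc : 0 < c) (hL : 0 ≤ L)
    (hcont : ContinuousOn f (Icc 0 L)) (hpos : ∀ t ∈ Icc 0 L, 0 < f t)
    (hub : ∀ t ∈ Icc 0 L, f t ≤ c + t) :
    Real.log (1 + L / c) ≤ ∫ t in (0:ℝ)..L, 1 / f t := by
  have huicc : Set.uIcc (0:ℝ) L = Set.Icc 0 L := Set.uIcc_of_le hL
  have hint1 : IntervalIntegrable (fun t => 1 / (c + t)) volume 0 L := by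
    apply ContinuousOn.intervalIntegrable
    rw [huicc]
    exact contOn_one_div (continuousOn_const.add continuousOn_id)
      (fun t ht => by have := ht.1; positivity)
  have hint2 : IntervalIntegrable (fun t => 1 / f t) volume 0 L := by
    apply ContinuousOn.intervalIntegrable
    rw [huicc]
    exact contOn_one_div hcont hpos
  have key : ∫ t in (0:ℝ)..L, 1 / (c + t) ≤ ∫ t in (0:ℝ)..L, 1 / f t := by
    apply intervalIntegral.integral_mono_on hL hint1 hint2
    intro t ht
    exact one_div_le_one_div_of_le (hpos t ht) (hub t ht)
  rw [integral_one_div_add (by linarith) hL] at key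
  have : (c + L) / (c + 0) = 1 + L / c := by field_simp; ring
  rwa [this] at key

theorem lower_est' {f : ℝ → ℝ} {L c : ℝ} (hc : 0 < c) (hL : 0 ≤ L)
    (hcont : ContinuousOn f (Icc 0 L)) (hpos : ∀ t ∈ Icc 0 L, 0 < f t)
    (hub : ∀ t ∈ Icc 0 L, f t ≤ c + (L - t)) :
    Real.log (1 + L / c) ≤ ∫ t in (0:ℝ)..L, 1 / f t := by
  have huicc : Set.uIcc (0:ℝ) L = Set.Icc 0 L := Set.uIcc_of_le hL
  have hint1 : IntervalIntegrable (fun t => 1 / ((c + L) - t)) volume 0 L := by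
    apply ContinuousOn.intervalIntegrable
    rw [huicc]
    refine contOn_one_div (Continuous.continuousOn (by continuity))
      (fun t ht => by have := ht.2; linarith)
  have hint2 : IntervalIntegrable (fun t => 1 / f t) volume 0 L := by
    apply ContinuousOn.intervalIntegrable
    rw [huicc]
    exact contOn_one_div hcont hpos
  have key : ∫ t in (0:ℝ)..L, 1 / ((c + L) - t) ≤ ∫ t in (0:ℝ)..L, 1 / f t := by
    apply intervalIntegral.integral_mono_on hL hint1 hint2
    intro t ht
    apply one_div_le_one_div_of_le (hpos t ht)
    have := hub t ht; linarith
  rw [integral_one_div_sub (by simp; linarith) hL] at key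
  have h1 : (c + L - 0) / (c + L - L) = 1 + L / c := by
    rw [sub_zero, add_sub_cancel_right, add_div, div_self hc.ne']
  rwa [h1] at key

theorem half_est {f : ℝ → ℝ} {L A c m : ℝ} (hA : 1 ≤ A) (hm : 0 < m) (hmc : m ≤ c)
    (hmL : m < L)
    (hcont : ContinuousOn f (Icc 0 (L/2))) (hpos : ∀ t ∈ Icc 0 (L/2), 0 < f t)
    (h1 : ∀ t ∈ Icc 0 (L/2), c - t ≤ f t) (h3 : ∀ t ∈ Icc 0 (L/2), t ≤ A * f t) :
    ∫ t in (0:ℝ)..L/2, 1 / f t ≤ Real.log 2 + A * Real.log (1 + L / m) := by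
  have hL : 0 < L := hm.trans hmL
  have hA0 : 0 < A := lt_of_lt_of_le one_pos hA
  have hc : 0 < c := hm.trans_le hmc
  have hlogL : 0 ≤ Real.log (1 + L / m) := Real.log_nonneg (by
    have : 0 ≤ L / m := by positivity
    linarith)
  have hintf : ∀ a b : ℝ, 0 ≤ a → a ≤ b → b ≤ L/2 →
      IntervalIntegrable (fun t => 1 / f t) volume a b := by
    intro a b ha hab hb
    apply ContinuousOn.intervalIntegrable
    rw [Set.uIcc_of_le hab]
    exact (contOn_one_div hcont hpos).mono (Set.Icc_subset_Icc ha hb)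
  rcases le_or_gt L c with hcL | hcL
  · -- c ≥ L : f t ≥ c - t ≥ L/2 on [0, L/2]
    have key : ∫ t in (0:ℝ)..L/2, 1 / f t ≤ ∫ t in (0:ℝ)..L/2, 1 / (c - t) := by
      apply intervalIntegral.integral_mono_on (by positivity)
        (hintf 0 (L/2) le_rfl (by positivity) le_rfl)
        (ContinuousOn.intervalIntegrable (by
          rw [Set.uIcc_of_le (by positivity : (0:ℝ) ≤ L/2)]
          exact contOn_one_div (Continuous.continuousOn (by continuity))
            (fun t ht => by have := ht.2; linarith)))
      intro t ht
      exact one_div_le_one_div_of_le (by have := ht.2; linarith) (h1 t ht)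
    rw [integral_one_div_sub (by linarith) (by positivity)] at key
    have hb : (c - 0) / (c - L/2) ≤ 2 := by
      rw [div_le_iff₀ (by linarith)]; linarith
    calc ∫ t in (0:ℝ)..L/2, 1 / f t ≤ Real.log ((c - 0) / (c - L/2)) := key
      _ ≤ Real.log 2 := Real.log_le_log (by rw [div_pos_iff]; left; constructor <;> linarith) hb
      _ ≤ Real.log 2 + A * Real.log (1 + L / m) := by nlinarith
  · -- c < L : split at c/2
    have hs : c/2 ≤ L/2 := by linarith
    have hsplit : (∫ t in (0:ℝ)..c/2, 1 / f t) + ∫ t in (c/2)..(L/2), 1 / f t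
        = ∫ t in (0:ℝ)..L/2, 1 / f t :=
      intervalIntegral.integral_add_adjacent_intervals
        (hintf 0 (c/2) le_rfl (by positivity) hs)
        (hintf (c/2) (L/2) (by positivity) hs le_rfl)
    have e1 : ∫ t in (0:ℝ)..c/2, 1 / f t ≤ Real.log 2 := by
      have key : ∫ t in (0:ℝ)..c/2, 1 / f t ≤ ∫ t in (0:ℝ)..c/2, 1 / (c - t) := by
        apply intervalIntegral.integral_mono_on (by positivity)
          (hintf 0 (c/2) le_rfl (by positivity) hs)
          (ContinuousOn.intervalIntegrable (by
            rw [Set.uIcc_of_le (by positivity : (0:ℝ) ≤ c/2)]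
            exact contOn_one_div (Continuous.continuousOn (by continuity))
              (fun t ht => by have := ht.2; linarith)))
        intro t ht
        refine one_div_le_one_div_of_le (by have := ht.2; linarith) ?_
        exact h1 t ⟨ht.1, ht.2.trans hs⟩
      rw [integral_one_div_sub (by linarith) (by positivity)] at key
      have hb : (c - 0) / (c - c/2) = 2 := by
        rw [sub_zero, div_eq_iff (by linarith)]; ring
      rw [hb] at key
      exact key
    have e2 : ∫ t in (c/2)..(L/2), 1 / f t ≤ A * Real.log (1 + L / m) := by
      have key : ∫ t in (c/2)..(L/2), 1 / f t ≤ ∫ t in (c/2)..(L/2), A * (1 / t) := by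
        apply intervalIntegral.integral_mono_on hs
          (hintf (c/2) (L/2) (by positivity) hs le_rfl)
          (ContinuousOn.intervalIntegrable (by
            rw [Set.uIcc_of_le hs]
            apply ContinuousOn.mul continuousOn_const
            exact contOn_one_div continuousOn_id
              (fun t ht => by simpa using lt_of_lt_of_le (by positivity : (0:ℝ) < c/2) ht.1)))
        intro t ht
        have ht0 : 0 < t := lt_of_lt_of_le (by positivity) ht.1
        have hft : 0 < f t := hpos t ⟨by linarith, ht.2⟩
        rw [mul_one_div, div_le_div_iff₀ hft ht0, one_mul]
        exact h3 t ⟨by linarith, ht.2⟩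
      rw [intervalIntegral.integral_const_mul] at key
      have h0 : (0:ℝ) ∉ Set.uIcc (c/2) (L/2) := by
        rw [Set.uIcc_of_le hs]
        intro h; exact absurd h.1 (by simp; positivity)
      rw [integral_one_div h0] at key
      have hfrac : (L/2) / (c/2) = L / c := by
        field_simp
      rw [hfrac] at key
      refine key.trans ?_
      have : Real.log (L / c) ≤ Real.log (1 + L / m) := by
        apply Real.log_le_log (by positivity)
        have h1' : L / c ≤ L / m := div_le_div_of_nonneg_left hL.le hm hmc
        have h2' : (0:ℝ) ≤ 1 := zero_le_one
        linarith
      nlinarith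
    linarith [hsplit, e1, e2]

theorem cubic_ineq {v : ℝ} (hv0 : 0 ≤ v) (hv1 : v ≤ 1) :
    1 ≤ (1 + v) ^ 2 * (1 - v / 2) := by
  nlinarith [mul_nonneg hv0 (sub_nonneg.2 hv1), mul_nonneg (mul_nonneg hv0 hv0) (sub_nonneg.2 hv1)]

set_option maxHeartbeats 2000000 in
theorem upper_est {f : ℝ → ℝ} {L A dx dy m d : ℝ} (hA : 1 ≤ A) (hm : 0 < m)
    (hmx : m ≤ dx) (hmy : m ≤ dy) (hdL : d ≤ L) (hLd : L ≤ A * d) (hd : 0 ≤ d)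
    (hcont : ContinuousOn f (Icc 0 L)) (hpos : ∀ t ∈ Icc 0 L, 0 < f t)
    (h1 : ∀ t ∈ Icc 0 L, dx - t ≤ f t) (h2 : ∀ t ∈ Icc 0 L, dy - (L - t) ≤ f t)
    (h3 : ∀ t ∈ Icc 0 L, min t (L - t) ≤ A * f t) :
    ∫ t in (0:ℝ)..L, 1 / f t ≤ 4 * A ^ 2 * Real.log (1 + d / m) := by
  have hL0 : 0 ≤ L := hd.trans hdL
  have hA0 : 0 < A := lt_of_lt_of_le one_pos hA
  have hlogd : 0 ≤ Real.log (1 + d / m) := Real.log_nonneg (by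
    have : 0 ≤ d / m := by positivity
    linarith)
  have keyB : Real.log (1 + L / m) ≤ A * Real.log (1 + d / m) := by
    have hs0 : 0 ≤ L / (A * m) := by positivity
    have hb := bernoulli_log hs0 hA
    have e1 : 1 + A * (L / (A * m)) = 1 + L / m := by field_simp
    rw [e1] at hb
    refine hb.trans ?_
    have e2 : L / (A * m) ≤ d / m := by
      rw [div_le_div_iff₀ (by positivity) hm]
      nlinarith
    have := Real.log_le_log (by positivity) (by linarith : 1 + L / (A * m) ≤ 1 + d / m)
    nlinarith
  have hintf : ∀ a b : ℝ, 0 ≤ a → a ≤ b → b ≤ L →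
      IntervalIntegrable (fun t => 1 / f t) volume a b := by
    intro a b ha hab hb
    apply ContinuousOn.intervalIntegrable
    rw [Set.uIcc_of_le hab]
    exact (contOn_one_div hcont hpos).mono (Set.Icc_subset_Icc ha hb)
  have hhalf : (0:ℝ) ≤ L/2 := by positivity
  have hsplit : (∫ t in (0:ℝ)..L/2, 1 / f t) + ∫ t in (L/2)..L, 1 / f t
      = ∫ t in (0:ℝ)..L, 1 / f t :=
    intervalIntegral.integral_add_adjacent_intervals
      (hintf 0 (L/2) le_rfl hhalf (by linarith))
      (hintf (L/2) L hhalf (by linarith) le_rfl)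
  rcases le_or_gt L m with hLm | hmL
  · -- Case 1 : L ≤ m, f t ≥ m - min(t, L-t) ≥ m - L/2 > 0
    have hmL2 : 0 < m - L/2 := by linarith
    have e1 : ∫ t in (0:ℝ)..L/2, 1 / f t ≤ Real.log ((m - 0) / (m - L/2)) := by
      have key : ∫ t in (0:ℝ)..L/2, 1 / f t ≤ ∫ t in (0:ℝ)..L/2, 1 / (m - t) := by
        apply intervalIntegral.integral_mono_on hhalf
          (hintf 0 (L/2) le_rfl hhalf (by linarith))
          (ContinuousOn.intervalIntegrable (by
            rw [Set.uIcc_of_le hhalf]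
            exact contOn_one_div (Continuous.continuousOn (by continuity))
              (fun t ht => by have := ht.2; linarith)))
        intro t ht
        refine one_div_le_one_div_of_le (by have := ht.2; linarith) ?_
        have := h1 t ⟨ht.1, by linarith [ht.2]⟩
        linarith
      rwa [integral_one_div_sub (by linarith) hhalf] at key
    have e2 : ∫ t in (L/2)..L, 1 / f t ≤ Real.log ((m - 0) / (m - L/2)) := by
      have key : ∫ t in (L/2)..L, 1 / f t ≤ ∫ t in (L/2)..L, 1 / ((m - L) + t) := by
        apply intervalIntegral.integral_mono_on (by linarith)
          (hintf (L/2) L hhalf (by linarith) le_rfl)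
          (ContinuousOn.intervalIntegrable (by
            rw [Set.uIcc_of_le (by linarith : L/2 ≤ L)]
            exact contOn_one_div (Continuous.continuousOn (by continuity))
              (fun t ht => by have := ht.1; linarith)))
        intro t ht
        refine one_div_le_one_div_of_le (by have := ht.1; linarith) ?_
        have := h2 t ⟨by linarith [ht.1], ht.2⟩
        linarith
      rw [integral_one_div_add (by linarith) (by linarith : L/2 ≤ L)] at key
      have e : (m - L + L) / (m - L + L/2) = (m - 0) / (m - L/2) := by
        congr 1 <;> ring
      rwa [e] at key
    have hfrac : (m - 0) / (m - L/2) ≤ (1 + L/m) ^ 2 := by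
      rw [sub_zero, div_le_iff₀ hmL2]
      set v := L / m with hv
      have hv0 : 0 ≤ v := div_nonneg hL0 hm.le
      have hv1 : v ≤ 1 := by rw [hv, div_le_one hm]; exact hLm
      have key : 1 ≤ (1 + v)^2 * (1 - v/2) := cubic_ineq hv0 hv1
      have h2' := mul_le_mul_of_nonneg_left key hm.le
      rw [mul_one] at h2'
      calc m ≤ m * ((1 + v)^2 * (1 - v/2)) := h2'
        _ = (1 + v)^2 * (m - L/2) := by rw [hv]; field_simp
    have hlog2 : Real.log ((m - 0) / (m - L/2)) ≤ 2 * Real.log (1 + L/m) := by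
      have hpos' : 0 < (m - 0) / (m - L/2) := div_pos (by linarith) hmL2
      have := Real.log_le_log hpos' hfrac
      rwa [Real.log_pow, Nat.cast_ofNat] at this
    have final : (∫ t in (0:ℝ)..L, 1 / f t) ≤ 4 * Real.log (1 + L/m) := by
      rw [← hsplit]; linarith
    refine final.trans ?_
    have hAA : A ≤ A ^ 2 := by nlinarith
    nlinarith [mul_le_mul_of_nonneg_right hAA hlogd]
  · -- Case 2 : m < L
    have e1 : ∫ t in (0:ℝ)..L/2, 1 / f t ≤ Real.log 2 + A * Real.log (1 + L / m) := by
      apply half_est hA hm hmx hmL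
        (hcont.mono (Set.Icc_subset_Icc le_rfl (by linarith)))
        (fun t ht => hpos t ⟨ht.1, by linarith [ht.2]⟩)
        (fun t ht => h1 t ⟨ht.1, by linarith [ht.2]⟩)
      intro t ht
      have := h3 t ⟨ht.1, by linarith [ht.2]⟩
      have hmin : min t (L - t) = t := min_eq_left (by linarith [ht.2])
      rwa [hmin] at this
    have e2 : ∫ t in (L/2)..L, 1 / f t ≤ Real.log 2 + A * Real.log (1 + L / m) := by
      have flip : ∫ t in (L/2)..L, 1 / f t = ∫ u in (0:ℝ)..L/2, 1 / f (L - u) := by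
        rw [intervalIntegral.integral_comp_sub_left (fun u => 1 / f u) L]
        norm_num [sub_half]
      rw [flip]
      apply half_est hA hm hmy hmL
        (hcont.comp (Continuous.continuousOn (by continuity)) (by
          intro u hu
          constructor <;> [linarith [hu.2]; linarith [hu.1]]))
        (fun u hu => hpos (L - u) ⟨by linarith [hu.2], by linarith [hu.1]⟩)
        (fun u hu => by
          have := h2 (L - u) ⟨by linarith [hu.2], by linarith [hu.1]⟩
          simpa using this)
      intro u hu
      have := h3 (L - u) ⟨by linarith [hu.2], by linarith [hu.1]⟩
      have hmin : min (L - u) (L - (L - u)) = u := by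
        rw [min_eq_right (by linarith [hu.2])]; ring
      rwa [hmin] at this
    have hlog2L : Real.log 2 ≤ Real.log (1 + L/m) := by
      apply Real.log_le_log (by norm_num)
      have : 1 < L/m := (one_lt_div hm).mpr hmL
      linarith
    have final : (∫ t in (0:ℝ)..L, 1 / f t) ≤ (2 + 2*A) * Real.log (1 + L/m) := by
      rw [← hsplit]; nlinarith
    refine final.trans ?_
    have hlogL : 0 ≤ Real.log (1 + L/m) := Real.log_nonneg (by
      have : 0 ≤ L/m := by positivity
      linarith)
    have hAA : A ≤ A ^ 2 := by nlinarith
    have k1 : (2 + 2*A) * Real.log (1 + L/m) ≤ 4*A * Real.log (1 + L/m) := by nlinarith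
    have k2 : 4*A * Real.log (1 + L/m) ≤ 4*A * (A * Real.log (1 + d/m)) := by nlinarith [keyB]
    nlinarith [mul_le_mul_of_nonneg_right hAA hlogd]

theorem stmt1 {X : Type*} [MetricSpace X] [LocallyCompactSpace X]
    (hnc : ((Set.range ((↑) : X → UniformSpace.Completion X))ᶜ).Nonempty)
    {A : ℝ} (hA : 1 ≤ A) (hunif : IsUniformSpaceA X A) :
    ∀ x y : X,
      Real.log (1 + dist x y / min (distBdry x) (distBdry y)) ≤ qhDistX x y ∧
      qhDistX x y ≤ 4 * A ^ 2 *
        Real.log (1 + dist x y / min (distBdry x) (distBdry y)) := by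
  intro x y
  set m := min (distBdry x) (distBdry y) with hmdef
  have hmx : m ≤ distBdry x := min_le_left _ _
  have hmy : m ≤ distBdry y := min_le_right _ _
  have hm : 0 < m := lt_min (distBdry_pos hnc x) (distBdry_pos hnc y)
  set S := {r | ∃ (L : ℝ) (γ : ℝ → X), IsArclengthCurve γ L x y ∧
    r = ∫ t in (0:ℝ)..L, 1 / distBdry (γ t)} with hSdef
  -- lower bound for every element of S
  have hlow : ∀ r ∈ S, Real.log (1 + dist x y / m) ≤ r := by
    rintro r ⟨L, γ, ⟨hL0, hγ0, hγL, hcont, hunit⟩, rfl⟩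
    have hfcont : ContinuousOn (fun t => distBdry (γ t)) (Set.Icc 0 L) :=
      distBdry_lipschitz.continuous.comp_continuousOn hcont
    have hfpos : ∀ t ∈ Set.Icc 0 L, 0 < distBdry (γ t) :=
      fun t _ => distBdry_pos hnc _
    have hdL : dist x y ≤ L := by
      have := dist_le_of_unitSpeed hunit le_rfl hL0 le_rfl
      rw [hγ0, hγL] at this; linarith
    rcases min_cases (distBdry x) (distBdry y) with ⟨hmeq, _⟩ | ⟨hmeq, _⟩
    · -- m = distBdry x
      have hub : ∀ t ∈ Set.Icc 0 L, distBdry (γ t) ≤ distBdry x + t := by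
        intro t ht
        have h1 := distBdry_le (γ t) (γ 0)
        have h2 : dist (γ t) (γ 0) ≤ t := by
          rw [dist_comm]
          have := dist_le_of_unitSpeed hunit le_rfl ht.1 ht.2
          linarith
        rw [hγ0] at h1 h2
        linarith
      have := lower_est (c := distBdry x) (distBdry_pos hnc x) hL0 hfcont hfpos hub
      refine le_trans ?_ this
      apply Real.log_le_log (by positivity)
      rw [hmdef, hmeq]
      gcongr
      exact (distBdry_pos hnc x).le
    · -- m = distBdry y
      have hub : ∀ t ∈ Set.Icc 0 L, distBdry (γ t) ≤ distBdry y + (L - t) := by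
        intro t ht
        have h1 := distBdry_le (γ t) (γ L)
        have h2 : dist (γ t) (γ L) ≤ L - t := by
          have := dist_le_of_unitSpeed hunit ht.1 ht.2 le_rfl
          linarith
        rw [hγL] at h1 h2
        linarith
      have := lower_est' (c := distBdry y) (distBdry_pos hnc y) hL0 hfcont hfpos hub
      refine le_trans ?_ this
      apply Real.log_le_log (by positivity)
      rw [hmdef, hmeq]
      gcongr
      exact (distBdry_pos hnc y).le
  -- the uniform curve
  obtain ⟨L, γ, hγ, hLd, hcigar⟩ := hunif x y
  obtain ⟨hL0, hγ0, hγL, hcont, hunit⟩ := hγ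
  have hfcont : ContinuousOn (fun t => distBdry (γ t)) (Set.Icc 0 L) :=
    distBdry_lipschitz.continuous.comp_continuousOn hcont
  have hfpos : ∀ t ∈ Set.Icc 0 L, 0 < distBdry (γ t) :=
    fun t _ => distBdry_pos hnc _
  have hdL : dist x y ≤ L := by
    have := dist_le_of_unitSpeed hunit le_rfl hL0 le_rfl
    rw [hγ0, hγL] at this; linarith
  have hmem : (∫ t in (0:ℝ)..L, 1 / distBdry (γ t)) ∈ S :=
    ⟨L, γ, ⟨hL0, hγ0, hγL, hcont, hunit⟩, rfl⟩
  have hSne : S.Nonempty := ⟨_, hmem⟩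
  have hSbdd : BddBelow S := ⟨Real.log (1 + dist x y / m), hlow⟩
  constructor
  · exact le_csInf hSne hlow
  · refine le_trans (csInf_le hSbdd hmem) ?_
    apply upper_est hA hm hmx hmy hdL hLd dist_nonneg hfcont hfpos
    · intro t ht
      have h1 := distBdry_le (γ 0) (γ t)
      have h2 : dist (γ 0) (γ t) ≤ t := by
        have := dist_le_of_unitSpeed hunit le_rfl ht.1 ht.2
        linarith
      rw [hγ0] at h1 h2
      linarith
    · intro t ht
      have h1 := distBdry_le (γ L) (γ t)
      have h2 : dist (γ L) (γ t) ≤ L - t := by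
        rw [dist_comm]
        have := dist_le_of_unitSpeed hunit ht.1 ht.2 le_rfl
        linarith
      rw [hγL] at h1 h2
      linarith
    · exact hcigar
end
end

section
/- Let X be a δ-hyperbolic space with Busemann function b based at ξ ∈ ∂∞X, and define the Gromov product based at b by (x|y)_b = (b(x)+b(y)−d(x,y))/2. Then for all x, y ∈ X: (x|y)_b − 10δ ≤ (x|y)_o − (x|ξ)_o − (y|ξ)_o ≤ (x|y)_b + 10δ. -/
open Set Metric Filter

noncomputable section

/-- Gromov product (x|y)_o. -/
def gp {X : Type*} [MetricSpace X] (o x y : X) : ℝ :=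
  (dist x o + dist y o - dist x y) / 2

/-- `X` is Gromov δ-hyperbolic. -/
def IsGromovHyp (X : Type*) [MetricSpace X] (δ : ℝ) : Prop :=
  ∀ o x y z : X, min (gp o x z) (gp o z y) - δ ≤ gp o x y

/-- A Gromov sequence: (x_i | x_j)_o → ∞. -/
def IsGromovSeq {X : Type*} [MetricSpace X] (o : X) (s : ℕ → X) : Prop :=
  Tendsto (fun p : ℕ × ℕ => gp o (s p.1) (s p.2)) atTop atTop

/-- Equivalence of Gromov sequences: (x_i | y_i)_o → ∞. -/
def GromovEquiv {X : Type*} [MetricSpace X] (o : X) (s t : ℕ → X) : Prop :=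
  Tendsto (fun i => gp o (s i) (t i)) atTop atTop

/-- Gromov product (x|ξ)_p of a point and a boundary point (represented by the
Gromov sequence `ξ`), defined as the infimum over representatives of the class
of `ξ` of the liminf of Gromov products. -/
def gpPt {X : Type*} [MetricSpace X] (o p x : X) (ξ : ℕ → X) : ℝ :=
  sInf {r | ∃ s : ℕ → X, IsGromovSeq o s ∧ GromovEquiv o ξ s ∧
    r = liminf (fun i => gp p x (s i)) atTop}

/-- Gromov product (ξ|ζ)_p of two boundary points. -/
def gpPt2 {X : Type*} [MetricSpace X] (o p : X) (ξ ζ : ℕ → X) : ℝ :=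
  sInf {r | ∃ s t : ℕ → X, IsGromovSeq o s ∧ IsGromovSeq o t ∧
    GromovEquiv o ξ s ∧ GromovEquiv o ζ t ∧
    r = liminf (fun i => gp p (s i) (t i)) atTop}

/-- The Busemann function based at the boundary point `ξ`:
`b(x) = (o|ξ)_x − (x|ξ)_o`. -/
def bus {X : Type*} [MetricSpace X] (o : X) (ξ : ℕ → X) (x : X) : ℝ :=
  gpPt o x o ξ - gpPt o o x ξ

/-- The Gromov product based at the Busemann function `b` of `ξ`:
`(x|y)_b = (b(x)+b(y)−d(x,y))/2`. -/
def gpb {X : Type*} [MetricSpace X] (o : X) (ξ : ℕ → X) (x y : X) : ℝ :=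
  (bus o ξ x + bus o ξ y - dist x y) / 2

/-- The Gromov product based at `b` of two boundary points. -/
def gpbBdry {X : Type*} [MetricSpace X] (o : X) (ξ η ζ : ℕ → X) : ℝ :=
  sInf {r | ∃ s t : ℕ → X, IsGromovSeq o s ∧ IsGromovSeq o t ∧
    GromovEquiv o η s ∧ GromovEquiv o ζ t ∧
    r = liminf (fun i => gpb o ξ (s i) (t i)) atTop}

section AuxLemmas

variable {X : Type*} [MetricSpace X]

lemma gp_nonneg (o x y : X) : 0 ≤ gp o x y := by
  have h := dist_triangle x o y
  have h2 : dist o y = dist y o := dist_comm o y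
  unfold gp; linarith

lemma gp_le_left (o x y : X) : gp o x y ≤ dist x o := by
  have h := dist_triangle y x o
  have h2 : dist y x = dist x y := dist_comm y x
  unfold gp; linarith

lemma gp_comm (o x y : X) : gp o x y = gp o y x := by
  unfold gp; rw [dist_comm x y]; ring

lemma gp_sum (o x z : X) : gp x o z + gp o x z = dist x o := by
  unfold gp
  rw [dist_comm o x, dist_comm z x, dist_comm z o]
  ring

lemma self_equiv (o : X) {ξ : ℕ → X} (hξ : IsGromovSeq o ξ) : GromovEquiv o ξ ξ := by
  have h : Tendsto (fun i : ℕ => ((i, i) : ℕ × ℕ)) atTop atTop := by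
    rw [← prod_atTop_atTop_eq]; exact tendsto_id.prodMk tendsto_id
  have h2 : Tendsto ((fun p : ℕ × ℕ => gp o (ξ p.1) (ξ p.2)) ∘ fun i : ℕ => (i, i))
      atTop atTop := hξ.comp h
  exact h2

lemma gpseq_bddAbove (p q : X) (u : ℕ → X) :
    IsBoundedUnder (· ≤ ·) atTop (fun i => gp p q (u i)) :=
  isBoundedUnder_of ⟨dist q p, fun i => gp_le_left p q (u i)⟩

lemma gpseq_bddBelow (p q : X) (u : ℕ → X) :
    IsBoundedUnder (· ≥ ·) atTop (fun i => gp p q (u i)) :=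
  isBoundedUnder_of ⟨0, fun i => gp_nonneg p q (u i)⟩

lemma prod_tendsto {δ : ℝ} (hδ : 0 ≤ δ) (hX : IsGromovHyp X δ) {o : X} {ξ s t : ℕ → X}
    (hξ : IsGromovSeq o ξ) (hs : GromovEquiv o ξ s) (ht : GromovEquiv o ξ t) :
    Tendsto (fun p : ℕ × ℕ => gp o (s p.1) (t p.2)) atTop atTop := by
  rw [Filter.tendsto_atTop]
  intro C
  rcases eventually_atTop.1 (Filter.tendsto_atTop.1 hs (C + 2 * δ)) with ⟨N1, hN1⟩
  rcases eventually_atTop.1 (Filter.tendsto_atTop.1 ht (C + 2 * δ)) with ⟨N2, hN2⟩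
  rcases eventually_atTop.1 (Filter.tendsto_atTop.1 hξ (C + 2 * δ)) with ⟨⟨N3, N4⟩, hN34⟩
  rw [eventually_atTop]
  refine ⟨(max N1 N3, max N2 N4), ?_⟩
  rintro ⟨i, j⟩ hij
  rw [Prod.mk_le_mk] at hij
  obtain ⟨hi, hj⟩ := hij
  simp only [sup_le_iff] at hi hj
  have A : C + 2 * δ ≤ gp o (ξ i) (s i) := hN1 i hi.1
  have B : C + 2 * δ ≤ gp o (ξ i) (ξ j) := hN34 (i, j) (Prod.mk_le_mk.2 ⟨hi.2, hj.2⟩)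
  have Cc : C + 2 * δ ≤ gp o (ξ j) (t j) := hN2 j hj.1
  have h2 : C + δ ≤ gp o (ξ i) (t j) := by
    have hh := hX o (ξ i) (t j) (ξ j)
    have hm : C + 2 * δ ≤ min (gp o (ξ i) (ξ j)) (gp o (ξ j) (t j)) := le_min B Cc
    linarith
  have hA' : C + δ ≤ gp o (s i) (ξ i) := by rw [gp_comm]; linarith
  have hh := hX o (s i) (t j) (ξ i)
  have hm : C + δ ≤ min (gp o (s i) (ξ i)) (gp o (ξ i) (t j)) := le_min hA' h2
  simp only
  linarith

lemma limsup_le_liminf_add {δ : ℝ} (hδ : 0 ≤ δ) (hX : IsGromovHyp X δ) {o x : X}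
    {ξ s t : ℕ → X} (hξ : IsGromovSeq o ξ)
    (hs : GromovEquiv o ξ s) (ht : GromovEquiv o ξ t) :
    limsup (fun i => gp o x (t i)) atTop ≤ liminf (fun i => gp o x (s i)) atTop + δ := by
  set L := liminf (fun i => gp o x (s i)) atTop with hL
  apply limsup_le_of_le ((gpseq_bddBelow o x t).isCoboundedUnder_le)
  have hp := prod_tendsto hδ hX hξ ht hs
  rcases eventually_atTop.1 (Filter.tendsto_atTop.1 hp (dist x o)) with ⟨⟨N1, N2⟩, hN⟩
  rw [eventually_atTop]
  refine ⟨N1, fun i hi => ?_⟩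
  have key : gp o x (t i) - δ ≤ L := by
    apply le_liminf_of_le ((gpseq_bddAbove o x s).isCoboundedUnder_ge)
    rw [eventually_atTop]
    refine ⟨N2, fun j hj => ?_⟩
    have h1 := hX o x (s j) (t i)
    have h2 : dist x o ≤ gp o (t i) (s j) := hN (i, j) (Prod.mk_le_mk.2 ⟨hi, hj⟩)
    have h3 : gp o x (t i) ≤ dist x o := gp_le_left o x (t i)
    have h4 : min (gp o x (t i)) (gp o (t i) (s j)) = gp o x (t i) :=
      min_eq_left (h3.trans h2)
    rw [h4] at h1
    linarith
  linarith

lemma gpPt_bddBelow (o p x : X) (ξ : ℕ → X) :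
    BddBelow {r | ∃ s : ℕ → X, IsGromovSeq o s ∧ GromovEquiv o ξ s ∧
      r = liminf (fun i => gp p x (s i)) atTop} := by
  refine ⟨0, ?_⟩
  rintro r ⟨s, _, _, rfl⟩
  exact le_liminf_of_le ((gpseq_bddAbove p x s).isCoboundedUnder_ge)
    (Eventually.of_forall fun i => gp_nonneg p x (s i))

lemma gpPt_le_rep (o p x : X) (ξ s : ℕ → X) (hs1 : IsGromovSeq o s)
    (hs2 : GromovEquiv o ξ s) :
    gpPt o p x ξ ≤ liminf (fun i => gp p x (s i)) atTop :=
  csInf_le (gpPt_bddBelow o p x ξ) ⟨s, hs1, hs2, rfl⟩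

lemma le_gpPt (o p x : X) {ξ : ℕ → X} (hξ : IsGromovSeq o ξ) (a : ℝ)
    (h : ∀ s : ℕ → X, IsGromovSeq o s → GromovEquiv o ξ s →
      a ≤ liminf (fun i => gp p x (s i)) atTop) :
    a ≤ gpPt o p x ξ := by
  refine le_csInf ?_ ?_
  · exact ⟨liminf (fun i => gp p x (ξ i)) atTop, ξ, hξ, self_equiv o hξ, rfl⟩
  · rintro r ⟨s, h1, h2, rfl⟩
    exact h s h1 h2

lemma liminf_flip (o x : X) (t : ℕ → X) :
    liminf (fun i => gp x o (t i)) atTop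
      = dist x o - limsup (fun i => gp o x (t i)) atTop := by
  have heq : (fun i => gp x o (t i)) = fun i => dist x o - gp o x (t i) := by
    funext i
    have := gp_sum o x (t i)
    linarith
  rw [heq]
  exact liminf_const_sub atTop _ _ (gpseq_bddAbove o x t)
    ((gpseq_bddBelow o x t).isCoboundedUnder_le)

lemma bus_le (o x : X) {ξ : ℕ → X} (hξ : IsGromovSeq o ξ) :
    bus o ξ x ≤ dist x o - 2 * gpPt o o x ξ := by
  have hJ : gpPt o x o ξ ≤ liminf (fun i => gp x o (ξ i)) atTop :=
    gpPt_le_rep o x o ξ ξ hξ (self_equiv o hξ)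
  rw [liminf_flip o x ξ] at hJ
  have hI : gpPt o o x ξ ≤ liminf (fun i => gp o x (ξ i)) atTop :=
    gpPt_le_rep o o x ξ ξ hξ (self_equiv o hξ)
  have hll : liminf (fun i => gp o x (ξ i)) atTop ≤ limsup (fun i => gp o x (ξ i)) atTop :=
    liminf_le_limsup (gpseq_bddAbove o x ξ) (gpseq_bddBelow o x ξ)
  unfold bus
  linarith

lemma bus_ge {δ : ℝ} (hδ : 0 ≤ δ) (hX : IsGromovHyp X δ) (o x : X) {ξ : ℕ → X}
    (hξ : IsGromovSeq o ξ) :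
    dist x o - 2 * gpPt o o x ξ - δ ≤ bus o ξ x := by
  have hJ : dist x o - (gpPt o o x ξ + δ) ≤ gpPt o x o ξ := by
    apply le_gpPt o x o hξ
    intro t ht1 ht2
    have hST : limsup (fun i => gp o x (t i)) atTop - δ ≤ gpPt o o x ξ := by
      apply le_gpPt o o x hξ
      intro s hs1 hs2
      have := limsup_le_liminf_add hδ hX (x := x) hξ hs2 ht2
      linarith
    rw [liminf_flip o x t]
    linarith
  unfold bus
  linarith

end AuxLemmas

theorem stmt4 {X : Type*} [MetricSpace X] {δ : ℝ} (hδ : 0 ≤ δ) (hX : IsGromovHyp X δ)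
    (o : X) (ξ : ℕ → X) (hξ : IsGromovSeq o ξ) :
    ∀ x y : X,
      gpb o ξ x y - 10 * δ ≤ gp o x y - gpPt o o x ξ - gpPt o o y ξ ∧
      gp o x y - gpPt o o x ξ - gpPt o o y ξ ≤ gpb o ξ x y + 10 * δ := by
  intro x y
  have h1 := bus_le o x hξ
  have h2 := bus_le o y hξ
  have h3 := bus_ge hδ hX o x hξ
  have h4 := bus_ge hδ hX o y hξ
  constructor <;> (unfold gpb gp; linarith)
end
end
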